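/- Let D be a self-adjoint operator on a Hilbert space H. Define E = [[D, 1],[1, -D]] on Dom(D) ⊕ Dom(D) ⊆ H ⊕ H. Then E is self-adjoint and E² = (1+D²) ⊕ (1+D²) on Dom(D²) ⊕ Dom(D²); in particular E is invertible with bounded inverse. -/

import Mathlib

open scoped ZeroAtInfty
open Set MeasureTheory

variable {H : Type*} [NormedAddCommGroup H] [InnerProductSpace ℂ H] [CompleteSpace H]

theorem stmt10 (D : H →L[ℂ] H) (hD : IsSelfAdjoint D)
    (E : WithLp 2 (H × H) →L[ℂ] WithLp 2 (H × H))
    (hE : ∀ ξ η : H, E ((WithLp.equiv 2 (H × H)).symm (ξ, η)) =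
      (WithLp.equiv 2 (H × H)).symm (D ξ + η, ξ - D η)) :
    IsSelfAdjoint E ∧
    (∀ ξ η : H, E (E ((WithLp.equiv 2 (H × H)).symm (ξ, η))) =
      (WithLp.equiv 2 (H × H)).symm (ξ + D (D ξ), η + D (D η))) ∧
    IsUnit E := by
  have hDsym : ∀ a b : H, inner ℂ (D a) b = (inner ℂ a (D b) : ℂ) :=
    ContinuousLinearMap.isSelfAdjoint_iff_isSymmetric.mp hD
  have hE' : ∀ x : WithLp 2 (H × H),
      E x = (WithLp.equiv 2 (H × H)).symm (D x.fst + x.snd, x.fst - D x.snd) :=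
    fun x => hE x.fst x.snd
  have hsa : IsSelfAdjoint E := by
    rw [ContinuousLinearMap.isSelfAdjoint_iff_isSymmetric]
    intro x y
    simp only [ContinuousLinearMap.coe_coe, hE', WithLp.prod_inner_apply,
      WithLp.equiv_symm_apply, WithLp.ofLp_toLp, WithLp.ofLp_fst, WithLp.ofLp_snd, inner_add_left, inner_add_right,
      inner_sub_left, inner_sub_right, hDsym]
    ring
  have hsq : ∀ ξ η : H, E (E ((WithLp.equiv 2 (H × H)).symm (ξ, η))) =
      (WithLp.equiv 2 (H × H)).symm (ξ + D (D ξ), η + D (D η)) := by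
    intro ξ η
    rw [hE ξ η, hE (D ξ + η) (ξ - D η)]
    congr 1
    refine Prod.ext ?_ ?_ <;> simp <;> try abel
  refine ⟨hsa, hsq, ?_⟩
  -- the diagonal operator K = D ⊕ D
  set Φ := WithLp.prodContinuousLinearEquiv 2 ℂ H H with hΦ
  set K : WithLp 2 (H × H) →L[ℂ] WithLp 2 (H × H) :=
    (Φ.symm : H × H →L[ℂ] WithLp 2 (H × H)).comp ((D.prodMap D).comp
      (Φ : WithLp 2 (H × H) →L[ℂ] H × H)) with hK
  have hKapp : ∀ x : WithLp 2 (H × H),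
      K x = (WithLp.equiv 2 (H × H)).symm (D x.fst, D x.snd) := fun x => rfl
  have hKsa : IsSelfAdjoint K := by
    rw [ContinuousLinearMap.isSelfAdjoint_iff_isSymmetric]
    intro x y
    simp only [ContinuousLinearMap.coe_coe, hKapp, WithLp.prod_inner_apply,
      WithLp.equiv_symm_apply, WithLp.ofLp_toLp, WithLp.ofLp_fst, WithLp.ofLp_snd, hDsym]
  have hEE : E * E = 1 + K * K := by
    ext x
    have := hsq x.fst x.snd
    simp only [ContinuousLinearMap.mul_apply, ContinuousLinearMap.add_apply,
      ContinuousLinearMap.one_apply, hKapp]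
    calc E (E x) = (WithLp.equiv 2 (H × H)).symm (x.fst + D (D x.fst), x.snd + D (D x.snd)) :=
          hsq x.fst x.snd
      _ = x + (WithLp.equiv 2 (H × H)).symm (D (D x.fst), D (D x.snd)) := rfl
      _ = _ := by congr 1
  have hI : (Complex.I : ℂ) ∉ spectrum ℂ K := by
    intro h
    have := hKsa.mem_spectrum_eq_re h
    simp [Complex.ext_iff] at this
  have hI' : (-Complex.I : ℂ) ∉ spectrum ℂ K := by
    intro h
    have := hKsa.mem_spectrum_eq_re h
    simp [Complex.ext_iff] at this
  rw [spectrum.notMem_iff] at hI hI'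
  have hfac : (algebraMap ℂ _ Complex.I - K) * (algebraMap ℂ _ (-Complex.I) - K)
      = 1 + K * K := by
    have hc : K * algebraMap ℂ (WithLp 2 (H × H) →L[ℂ] WithLp 2 (H × H)) (-Complex.I)
        = algebraMap ℂ _ (-Complex.I) * K := (Algebra.commutes _ _).symm
    rw [sub_mul, mul_sub, mul_sub, ← map_mul, hc]
    have h1 : Complex.I * -Complex.I = 1 := by simp [Complex.I_mul_I]
    rw [h1, map_one, map_neg,
      neg_mul (algebraMap ℂ (WithLp 2 (H × H) →L[ℂ] WithLp 2 (H × H)) Complex.I) K]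
    abel
  have hu : IsUnit (E * E) := by
    rw [hEE, ← hfac]; exact hI.mul hI'
  obtain ⟨u, hu⟩ := hu
  have hcomm : Commute E ↑u := by rw [hu]; exact (Commute.refl E).mul_right (Commute.refl E)
  have hcomm' : Commute E ↑u⁻¹ := hcomm.units_inv_right
  refine ⟨⟨E, E * ↑u⁻¹, ?_, ?_⟩, rfl⟩
  · rw [← mul_assoc, ← hu, u.mul_inv]
  · rw [mul_assoc, ← hcomm'.eq, ← mul_assoc, ← hu, u.mul_inv]
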